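/- Let D : A → A* be a continuous derivation. Then D̃ : A ⋈^θ I → (A ⋈^θ I)* defined by D̃(a,i) = (D(a), 0) (under the identification (A ⋈^θ I)* ≅ A* × I*) is a continuous derivation, and D̃ is inner if and only if D is inner. -/

import Mathlib

noncomputable def amul {A B : Type*} [NonUnitalNormedRing A] [NormedSpace ℂ A]
    [NonUnitalNormedRing B] [NormedSpace ℂ B]
    (θ : A →L[ℂ] B) {I : Submodule ℂ B}
    (hIl : ∀ b i : B, i ∈ I → b * i ∈ I) (hIr : ∀ b i : B, i ∈ I → i * b ∈ I)
    (x y : A × I) : A × I :=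
  (x.1 * y.1,
    ⟨θ x.1 * (y.2 : B) + (x.2 : B) * θ y.1 + (x.2 : B) * (y.2 : B),
      I.add_mem (I.add_mem (hIl _ _ y.2.2) (hIr _ _ x.2.2)) (hIr _ _ x.2.2)⟩)

open NormedSpace

/-- The extension `D̃(a,i) = (D(a), 0)` of a map `D : A → A*` to a map
`A ⋈^θ I → (A ⋈^θ I)* ≅ A* × I*`. -/
noncomputable def Dtilde {A B : Type*} [NonUnitalNormedRing A] [NormedSpace ℂ A]
    [NonUnitalNormedRing B] [NormedSpace ℂ B] {I : Submodule ℂ B}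
    (D : A →L[ℂ] StrongDual ℂ A) (p : A × I) : StrongDual ℂ A × StrongDual ℂ I :=
  (D p.1, 0)

/-- If `D : A → A*` is a continuous derivation, then `D̃ : A ⋈^θ I → (A ⋈^θ I)*`,
`D̃(a,i) = (D(a),0)`, is a derivation for the dual bimodule actions
`(a,i)·(f,g) = (a·f + θ*(i·g), (θ(a)+i)·g)` and `(f,g)·(a,i) = (f·a + θ*(g·i), g·(θ(a)+i))`
(stated by pairing against an arbitrary `(b,j)`), and `D̃` is inner if and only if `D`
is inner. -/
theorem amalgamation_derivation_extension {A B : Type*} [NonUnitalNormedRing A]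
    [NormedSpace ℂ A] [IsScalarTower ℂ A A] [SMulCommClass ℂ A A] [CompleteSpace A]
    [NonUnitalNormedRing B] [NormedSpace ℂ B]
    [IsScalarTower ℂ B B] [SMulCommClass ℂ B B] [CompleteSpace B]
    (θ : A →L[ℂ] B) (hθ : ∀ x y : A, θ (x * y) = θ x * θ y)
    (I : Submodule ℂ B) (hIc : IsClosed (I : Set B))
    (hIl : ∀ b i : B, i ∈ I → b * i ∈ I) (hIr : ∀ b i : B, i ∈ I → i * b ∈ I)
    (D : A →L[ℂ] StrongDual ℂ A) (hD : ∀ a b c : A, D (a * b) c = D b (c * a) + D a (b * c)) :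
    (∀ x y : A × I, ∀ (b : A) (j : I),
      (Dtilde (I := I) D (amul θ hIl hIr x y)).1 b
          + (Dtilde (I := I) D (amul θ hIl hIr x y)).2 j
        = ((Dtilde (I := I) D y).1 (b * x.1)
            + (Dtilde (I := I) D y).2 ⟨θ b * (x.2 : B), hIl _ _ x.2.2⟩
            + (Dtilde (I := I) D y).2 ⟨(j : B) * (θ x.1 + (x.2 : B)), hIr _ _ j.2⟩)
          + ((Dtilde (I := I) D x).1 (y.1 * b)
            + (Dtilde (I := I) D x).2 ⟨(y.2 : B) * θ b, hIr _ _ y.2.2⟩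
            + (Dtilde (I := I) D x).2 ⟨(θ y.1 + (y.2 : B)) * (j : B), hIl _ _ j.2⟩)) ∧
    ((∃ (f : StrongDual ℂ A) (g : StrongDual ℂ I), ∀ (a : A) (i : I),
        (∀ b : A, D a b = (f (b * a) + g ⟨θ b * (i : B), hIl _ _ i.2⟩)
            - (f (a * b) + g ⟨(i : B) * θ b, hIr _ _ i.2⟩)) ∧
        (∀ j : I, (0 : ℂ) = g ⟨(j : B) * (θ a + (i : B)), hIr _ _ j.2⟩
            - g ⟨(θ a + (i : B)) * (j : B), hIl _ _ j.2⟩)) ↔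
      (∃ f : StrongDual ℂ A, ∀ a b : A, D a b = f (b * a) - f (a * b))) := by
  refine ⟨fun x y b j => ?_, ?_, ?_⟩
  · simp [Dtilde, amul, hD x.1 y.1 b]
  · rintro ⟨f, g, h⟩
    refine ⟨f, fun a b => ?_⟩
    have h1 := (h a 0).1 b
    have e1 : (⟨θ b * ((0 : I) : B), hIl _ _ (0 : I).2⟩ : I) = 0 := Subtype.ext (by simp)
    have e2 : (⟨((0 : I) : B) * θ b, hIr _ _ (0 : I).2⟩ : I) = 0 := Subtype.ext (by simp)
    rw [e1, e2, map_zero] at h1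
    simpa using h1
  · rintro ⟨f, hf⟩
    exact ⟨f, 0, fun a i => ⟨fun b => by simp [hf], fun j => by simp⟩⟩
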